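/- For the 1D two-phase example, if N = 4k+1 for some k ∈ ℕ, then the piecewise linear nodal interpolant v_N = I_N(u) on N uniformly spaced nodes in [−1,1] satisfies {v_N < 0} = {u < 0}, {v_N = 0} = {u = 0}, {v_N > 0} = {u > 0}, and hence μ_ω(v_N) = 0. -/

import Mathlib

open MeasureTheory

/-- Exact solution of the 1D two-phase obstacle problem. -/
noncomputable def uTP (x : ℝ) : ℝ :=
  if x ≤ -(1/2) then -4*x^2 - 4*x - 1
  else if x ≤ 1/2 then 0
  else 4*x^2 - 4*x + 1

/-- Piecewise linear nodal interpolant of `uTP` on `N` uniformly spaced nodes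
`x_j = −1 + j·h`, `h = 2/(N−1)`, in `[−1,1]`. -/
noncomputable def vInterp (N : ℕ) (x : ℝ) : ℝ :=
  let h : ℝ := 2 / (N - 1)
  let j : ℤ := ⌊(x + 1) / h⌋
  let xj : ℝ := -1 + j * h
  uTP xj + (uTP (xj + h) - uTP xj) * (x - xj) / h

lemma uTP_neg_of {y : ℝ} (h : y < -(1/2)) : uTP y < 0 := by
  unfold uTP; split_ifs <;> first | nlinarith | linarith
lemma uTP_nonpos_of {y : ℝ} (h : y ≤ -(1/2)) : uTP y ≤ 0 := by
  unfold uTP; split_ifs <;> first | nlinarith | linarith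
lemma uTP_zero_of {y : ℝ} (h1 : -(1/2) ≤ y) (h2 : y ≤ 1/2) : uTP y = 0 := by
  unfold uTP; split_ifs <;> first | nlinarith | linarith | rfl
lemma uTP_sq_of {y : ℝ} (h : 1/2 ≤ y) : uTP y = (2*y-1)^2 := by
  unfold uTP; split_ifs <;> first | nlinarith | linarith | ring
lemma uTP_pos_of {y : ℝ} (h : 1/2 < y) : 0 < uTP y := by
  unfold uTP; split_ifs <;> first | nlinarith | linarith

lemma uTP_sign (x : ℝ) :
    (uTP x < 0 ↔ x < -(1/2)) ∧ (uTP x = 0 ↔ -(1/2) ≤ x ∧ x ≤ 1/2) ∧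
    (0 < uTP x ↔ 1/2 < x) := by
  unfold uTP
  split_ifs with h1 h2
  · refine ⟨⟨fun h => ?_, fun h => by nlinarith⟩,
      ⟨fun h => ⟨by nlinarith, by linarith⟩, fun ⟨ha, hb⟩ => by nlinarith⟩,
      ⟨fun h => by nlinarith, fun h => by linarith⟩⟩
    by_contra hc
    push_neg at hc
    have : x = -(1/2) := le_antisymm h1 hc
    rw [this] at h; norm_num at h
  · push_neg at h1
    exact ⟨⟨fun h => by norm_num at h, fun h => by linarith⟩,
      ⟨fun _ => ⟨by linarith, by linarith⟩, fun _ => rfl⟩,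
      ⟨fun h => by norm_num at h, fun h => by linarith⟩⟩
  · push_neg at h1 h2
    exact ⟨⟨fun h => by nlinarith, fun h => by linarith⟩,
      ⟨fun h => by nlinarith, fun ⟨ha, hb⟩ => by linarith⟩,
      ⟨fun _ => h2, fun _ => by nlinarith⟩⟩

lemma interp_core (k : ℕ) (hk : 0 < k) (h : ℝ) (hh : h = 1/(2*(k:ℝ)))
    (j : ℤ) (xj x : ℝ) (hxj : xj = -1 + (j:ℝ)*h)
    (hfl : (j:ℝ) ≤ (x+1)/h) (hfl' : (x+1)/h < (j:ℝ) + 1)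
    (hx1 : -1 ≤ x) (hx2 : x ≤ 1) :
    (x < -(1/2) → uTP xj + (uTP (xj + h) - uTP xj) * (x - xj) / h < 0) ∧
    (-(1/2) ≤ x → x ≤ 1/2 → uTP xj + (uTP (xj + h) - uTP xj) * (x - xj) / h = 0) ∧
    (1/2 < x → 0 < uTP xj + (uTP (xj + h) - uTP xj) * (x - xj) / h) := by
  have hk1 : (1:ℝ) ≤ (k:ℝ) := by exact_mod_cast hk
  have hhpos : 0 < h := by rw [hh]; positivity
  have hkh : (k:ℝ) * h = 1/2 := by rw [hh]; field_simp
  have hxj_le : xj ≤ x := by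
    have := (le_div_iff₀ hhpos).mp hfl
    rw [hxj]; linarith
  have hx_lt : x < xj + h := by
    have := (div_lt_iff₀ hhpos).mp hfl'
    rw [hxj]; linarith
  have ht0 : 0 ≤ (x - xj)/h := div_nonneg (by linarith) hhpos.le
  have ht1 : (x - xj)/h < 1 := by rw [div_lt_one hhpos]; linarith
  have hsplit : uTP xj + (uTP (xj+h) - uTP xj) * (x - xj) / h
      = (1 - (x-xj)/h) * uTP xj + ((x-xj)/h) * uTP (xj+h) := by
    field_simp; ring
  refine ⟨fun hxlt => ?_, fun hge hle => ?_, fun hgt => ?_⟩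
  · have hjk : (j:ℝ) + 1 ≤ (k:ℝ) := by
      have h2 : (x+1)/h < (k:ℝ) := by rw [div_lt_iff₀ hhpos]; linarith
      have h3 : (j:ℤ) < (k:ℤ) := by exact_mod_cast lt_of_le_of_lt hfl h2
      exact_mod_cast h3
    have hub : xj + h ≤ -(1/2) := by
      have := mul_le_mul_of_nonneg_right hjk hhpos.le
      rw [hxj]; linarith
    have hA := uTP_neg_of (show xj < -(1/2) by linarith)
    have hB := uTP_nonpos_of hub
    rw [hsplit]
    have p1 := mul_nonpos_of_nonneg_of_nonpos ht0 hB
    have p2 := mul_neg_of_pos_of_neg (by linarith : (0:ℝ) < 1 - (x-xj)/h) hA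
    linarith
  · have hjk : (k:ℝ) ≤ (j:ℝ) := by
      have h2 : (k:ℝ) ≤ (x+1)/h := by rw [le_div_iff₀ hhpos]; linarith
      have h3 : (k:ℤ) < j + 1 := by exact_mod_cast lt_of_le_of_lt h2 hfl'
      have h4 : (k:ℤ) ≤ j := by omega
      exact_mod_cast h4
    have hj3k : (j:ℝ) ≤ 3*(k:ℝ) := by
      have h2 : (x+1)/h ≤ 3*(k:ℝ) := by rw [div_le_iff₀ hhpos]; linarith
      exact le_trans hfl h2
    have hxj_ge : -(1/2) ≤ xj := by
      have := mul_le_mul_of_nonneg_right hjk hhpos.le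
      rw [hxj]; linarith
    rcases eq_or_lt_of_le hj3k with heq | hlt
    · have hxj_val : xj = 1/2 := by rw [hxj, heq]; linarith
      have hx_eq : x = 1/2 := le_antisymm hle (by rw [← hxj_val]; exact hxj_le)
      have hd : x - xj = 0 := by rw [hx_eq, hxj_val]; ring
      have hu0 : uTP xj = 0 := uTP_zero_of hxj_ge (le_of_eq hxj_val)
      rw [hd, hu0]; ring
    · have hjk' : (j:ℝ) + 1 ≤ 3*(k:ℝ) := by
        have h3 : (j:ℤ) < 3*(k:ℤ) := by exact_mod_cast hlt
        have h4 : (j:ℤ) + 1 ≤ 3*(k:ℤ) := by omega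
        exact_mod_cast h4
      have hub : xj + h ≤ 1/2 := by
        have := mul_le_mul_of_nonneg_right hjk' hhpos.le
        rw [hxj]; linarith
      have hA : uTP xj = 0 := uTP_zero_of hxj_ge (by linarith)
      have hB : uTP (xj + h) = 0 := uTP_zero_of (by linarith) hub
      rw [hA, hB]; ring
  · have hjk : 3*(k:ℝ) ≤ (j:ℝ) := by
      have h2 : 3*(k:ℝ) ≤ (x+1)/h := by rw [le_div_iff₀ hhpos]; linarith
      have h3 : (3*(k:ℤ) : ℤ) < j + 1 := by
        have : ((3*(k:ℤ) : ℤ) : ℝ) ≤ (x+1)/h := by push_cast; exact h2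
        exact_mod_cast lt_of_le_of_lt this hfl'
      have h4 : 3*(k:ℤ) ≤ j := by omega
      exact_mod_cast h4
    have hxj_ge : 1/2 ≤ xj := by
      have := mul_le_mul_of_nonneg_right hjk hhpos.le
      rw [hxj]; linarith
    have hA : uTP xj = (2*xj - 1)^2 := uTP_sq_of hxj_ge
    have hB : 0 < uTP (xj + h) := uTP_pos_of (by linarith)
    rw [hsplit, hA]
    rcases lt_or_eq_of_le hxj_ge with hgt' | heq'
    · have p1 := mul_nonneg ht0 hB.le
      have p2 := mul_pos (by linarith : (0:ℝ) < 1 - (x-xj)/h)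
        (by nlinarith : (0:ℝ) < (2*xj-1)^2)
      linarith
    · have hz : (2*xj - 1)^2 = 0 := by rw [← heq']; ring
      rw [hz]
      have htp : 0 < (x - xj)/h := div_pos (by rw [← heq']; linarith) hhpos
      have p1 := mul_pos htp hB
      linarith [mul_zero (1 - (x-xj)/h)]

lemma vInterp_sign (k : ℕ) (hk : 0 < k) (x : ℝ) (hx1 : -1 ≤ x) (hx2 : x ≤ 1) :
    (x < -(1/2) → vInterp (4*k+1) x < 0) ∧
    (-(1/2) ≤ x → x ≤ 1/2 → vInterp (4*k+1) x = 0) ∧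
    (1/2 < x → 0 < vInterp (4*k+1) x) := by
  have hk1 : (1:ℝ) ≤ (k:ℝ) := by exact_mod_cast hk
  have hh : (2:ℝ) / (((4*k+1:ℕ):ℝ) - 1) = 1/(2*(k:ℝ)) := by
    push_cast
    rw [div_eq_div_iff (by linarith) (by linarith)]
    ring
  exact interp_core k hk _ hh ⌊(x+1)/((2:ℝ)/(((4*k+1:ℕ):ℝ)-1))⌋ _ x rfl
    (Int.floor_le _) (Int.lt_floor_add_one _) hx1 hx2

lemma vInterp_iff (k : ℕ) (hk : 0 < k) (x : ℝ) (hx : x ∈ Set.Icc (-1:ℝ) 1) :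
    (vInterp (4*k+1) x < 0 ↔ uTP x < 0) ∧
    (vInterp (4*k+1) x = 0 ↔ uTP x = 0) ∧
    (0 < vInterp (4*k+1) x ↔ 0 < uTP x) := by
  obtain ⟨hx1, hx2⟩ := hx
  obtain ⟨hv1, hv2, hv3⟩ := vInterp_sign k hk x hx1 hx2
  obtain ⟨hu1, hu2, hu3⟩ := uTP_sign x
  refine ⟨⟨fun h => ?_, fun h => hv1 (hu1.mp h)⟩,
    ⟨fun h => ?_, fun h => ?_⟩, ⟨fun h => ?_, fun h => hv3 (hu3.mp h)⟩⟩
  · rw [hu1]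
    by_contra hc
    push_neg at hc
    rcases le_or_gt x (1/2) with h' | h'
    · have := hv2 hc h'; linarith
    · have := hv3 h'; linarith
  · rw [hu2]
    rcases lt_or_ge x (-(1/2)) with h' | h'
    · have := hv1 h'; exact absurd h (by linarith)
    · rcases le_or_gt x (1/2) with h'' | h''
      · exact ⟨h', h''⟩
      · have := hv3 h''; exact absurd h (by linarith)
  · obtain ⟨ha, hb⟩ := hu2.mp h
    exact hv2 ha hb
  · rw [hu3]
    by_contra hc
    push_neg at hc
    rcases lt_or_ge x (-(1/2)) with h' | h'
    · have := hv1 h'; linarith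
    · have := hv2 h' hc; linarith

theorem interpolant_sign_sets_and_measure (N k : ℕ) (hk : 0 < k) (hN : N = 4*k + 1) :
    ({x ∈ Set.Icc (-1:ℝ) 1 | vInterp N x < 0} = {x ∈ Set.Icc (-1:ℝ) 1 | uTP x < 0}) ∧
    ({x ∈ Set.Icc (-1:ℝ) 1 | vInterp N x = 0} = {x ∈ Set.Icc (-1:ℝ) 1 | uTP x = 0}) ∧
    ({x ∈ Set.Icc (-1:ℝ) 1 | 0 < vInterp N x} = {x ∈ Set.Icc (-1:ℝ) 1 | 0 < uTP x}) ∧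
    -- the nonlinear measure `μ_ω(v_N)` of the two-phase error identity vanishes
    (8 * (∫ x in {x ∈ Set.Icc (-1:ℝ) 1 | 0 < vInterp N x} ∩
            {x ∈ Set.Icc (-1:ℝ) 1 | uTP x = 0}, |vInterp N x|) +
      8 * (∫ x in {x ∈ Set.Icc (-1:ℝ) 1 | vInterp N x < 0} ∩
            {x ∈ Set.Icc (-1:ℝ) 1 | uTP x = 0}, |vInterp N x|) +
      (8 + 8) * (∫ x in ({x ∈ Set.Icc (-1:ℝ) 1 | 0 < vInterp N x} ∩
            {x ∈ Set.Icc (-1:ℝ) 1 | uTP x < 0}) ∪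
          ({x ∈ Set.Icc (-1:ℝ) 1 | vInterp N x < 0} ∩
            {x ∈ Set.Icc (-1:ℝ) 1 | 0 < uTP x}), |vInterp N x|)) = 0 := by
  subst hN
  have hs1 : {x ∈ Set.Icc (-1:ℝ) 1 | vInterp (4*k+1) x < 0}
      = {x ∈ Set.Icc (-1:ℝ) 1 | uTP x < 0} := by
    ext x
    simp only [Set.mem_setOf_eq]
    exact and_congr_right fun hx => (vInterp_iff k hk x hx).1
  have hs2 : {x ∈ Set.Icc (-1:ℝ) 1 | vInterp (4*k+1) x = 0}
      = {x ∈ Set.Icc (-1:ℝ) 1 | uTP x = 0} := by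
    ext x
    simp only [Set.mem_setOf_eq]
    exact and_congr_right fun hx => (vInterp_iff k hk x hx).2.1
  have hs3 : {x ∈ Set.Icc (-1:ℝ) 1 | 0 < vInterp (4*k+1) x}
      = {x ∈ Set.Icc (-1:ℝ) 1 | 0 < uTP x} := by
    ext x
    simp only [Set.mem_setOf_eq]
    exact and_congr_right fun hx => (vInterp_iff k hk x hx).2.2
  refine ⟨hs1, hs2, hs3, ?_⟩
  rw [hs1, hs3]
  have e1 : {x ∈ Set.Icc (-1:ℝ) 1 | 0 < uTP x} ∩ {x ∈ Set.Icc (-1:ℝ) 1 | uTP x = 0}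
      = ∅ := by
    ext x
    simp only [Set.mem_inter_iff, Set.mem_setOf_eq, Set.mem_empty_iff_false, iff_false]
    rintro ⟨⟨_, h1⟩, ⟨_, h2⟩⟩
    rw [h2] at h1; exact lt_irrefl 0 h1
  have e2 : {x ∈ Set.Icc (-1:ℝ) 1 | uTP x < 0} ∩ {x ∈ Set.Icc (-1:ℝ) 1 | uTP x = 0}
      = ∅ := by
    ext x
    simp only [Set.mem_inter_iff, Set.mem_setOf_eq, Set.mem_empty_iff_false, iff_false]
    rintro ⟨⟨_, h1⟩, ⟨_, h2⟩⟩
    rw [h2] at h1; exact lt_irrefl 0 h1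
  have e3 : ({x ∈ Set.Icc (-1:ℝ) 1 | 0 < uTP x} ∩ {x ∈ Set.Icc (-1:ℝ) 1 | uTP x < 0})
      ∪ ({x ∈ Set.Icc (-1:ℝ) 1 | uTP x < 0} ∩ {x ∈ Set.Icc (-1:ℝ) 1 | 0 < uTP x})
      = ∅ := by
    ext x
    simp only [Set.mem_union, Set.mem_inter_iff, Set.mem_setOf_eq,
      Set.mem_empty_iff_false, iff_false]
    rintro (⟨⟨_, h1⟩, ⟨_, h2⟩⟩ | ⟨⟨_, h1⟩, ⟨_, h2⟩⟩) <;> linarith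
  rw [e1, e2, e3]
  simp
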